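/- For every integer m, if there exist integers x, y, z with x² + y² + 3z² = 4m, then there exist integers a, b, c with a² + b² + 3c² = m. In other words, the set of integers represented by Q₃ over ℤ is closed under division by 4. -/
import Mathlib


/-- The set of integers represented by `Q₃(x,y,z) = x² + y² + 3z²` over ℤ is closed
under division by `4`: if `4m` is represented, so is `m`. -/
theorem Q3_represents_of_represents_four_mul (m : ℤ)
    (h : ∃ x y z : ℤ, x ^ 2 + y ^ 2 + 3 * z ^ 2 = 4 * m) :
    ∃ a b c : ℤ, a ^ 2 + b ^ 2 + 3 * c ^ 2 = m := by
  obtain ⟨x, y, z, hxyz⟩ := h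
  rcases Int.even_or_odd x with ⟨p, hp⟩ | ⟨p, hp⟩ <;>
  rcases Int.even_or_odd y with ⟨q, hq⟩ | ⟨q, hq⟩ <;>
  rcases Int.even_or_odd z with ⟨r, hr⟩ | ⟨r, hr⟩ <;>
    subst hp hq hr
  · -- all even
    refine ⟨p, q, r, ?_⟩
    have key : 4 * (p ^ 2 + q ^ 2 + 3 * r ^ 2) = 4 * m := by linear_combination hxyz
    linarith
  · -- x even, y even, z odd : impossible
    exfalso
    obtain ⟨A, hA⟩ : ∃ A : ℤ, 4 * A + 3 = 4 * m :=
      ⟨p ^ 2 + q ^ 2 + 3 * r ^ 2 + 3 * r, by linear_combination hxyz⟩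
    omega
  · -- x even, y odd, z even : impossible
    exfalso
    obtain ⟨A, hA⟩ : ∃ A : ℤ, 4 * A + 1 = 4 * m :=
      ⟨p ^ 2 + q ^ 2 + q + 3 * r ^ 2, by linear_combination hxyz⟩
    omega
  · -- x even, y odd, z odd
    rcases Int.even_or_odd (q + r) with ⟨s, hs⟩ | ⟨s, hs⟩
    · have hq2 : q = s + s - r := by omega
      subst hq2
      refine ⟨s + r + 1, p, s - r, ?_⟩
      have key : 4 * ((s + r + 1) ^ 2 + p ^ 2 + 3 * (s - r) ^ 2) = 4 * m := by
        linear_combination hxyz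
      linarith
    · have hq2 : q = 2 * s + 1 - r := by omega
      subst hq2
      refine ⟨s - 2 * r, p, s + 1, ?_⟩
      have key : 4 * ((s - 2 * r) ^ 2 + p ^ 2 + 3 * (s + 1) ^ 2) = 4 * m := by
        linear_combination hxyz
      linarith
  · -- x odd, y even, z even : impossible
    exfalso
    obtain ⟨A, hA⟩ : ∃ A : ℤ, 4 * A + 1 = 4 * m :=
      ⟨p ^ 2 + p + q ^ 2 + 3 * r ^ 2, by linear_combination hxyz⟩
    omega
  · -- x odd, y even, z odd
    rcases Int.even_or_odd (p + r) with ⟨s, hs⟩ | ⟨s, hs⟩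
    · have hp2 : p = s + s - r := by omega
      subst hp2
      refine ⟨s + r + 1, q, s - r, ?_⟩
      have key : 4 * ((s + r + 1) ^ 2 + q ^ 2 + 3 * (s - r) ^ 2) = 4 * m := by
        linear_combination hxyz
      linarith
    · have hp2 : p = 2 * s + 1 - r := by omega
      subst hp2
      refine ⟨s - 2 * r, q, s + 1, ?_⟩
      have key : 4 * ((s - 2 * r) ^ 2 + q ^ 2 + 3 * (s + 1) ^ 2) = 4 * m := by
        linear_combination hxyz
      linarith
  · -- x odd, y odd, z even : impossible
    exfalso
    obtain ⟨A, hA⟩ : ∃ A : ℤ, 4 * A + 2 = 4 * m :=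
      ⟨p ^ 2 + p + q ^ 2 + q + 3 * r ^ 2, by linear_combination hxyz⟩
    omega
  · -- all odd : impossible
    exfalso
    obtain ⟨A, hA⟩ : ∃ A : ℤ, 4 * A + 5 = 4 * m :=
      ⟨p ^ 2 + p + q ^ 2 + q + 3 * r ^ 2 + 3 * r, by linear_combination hxyz⟩
    omega
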